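/- (The angles ω n converge to the right angle.) The sequence ω n := Real.arccos (1 - (q n)^2 / (2 * (p n)^2)) tends to π / 2 as n → ∞, i.e. Filter.Tendsto (fun n => Real.arccos (1 - ((q n : ℝ))^2 / (2 * ((p n : ℝ))^2))) Filter.atTop (nhds (Real.pi / 2)). -/

import Mathlib

mutual
/-- The Pythagorean side numbers. -/
def p : ℕ → ℕ
  | 0 => 1
  | n + 1 => p n + q n
/-- The Pythagorean diameter numbers. -/
def q : ℕ → ℕ
  | 0 => 1
  | n + 1 => 2 * p n + q n
end

lemma pell_pq : ∀ n : ℕ, ((q n : ℝ)) ^ 2 = 2 * ((p n : ℝ)) ^ 2 + (-1) ^ (n + 1)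
  | 0 => by norm_num [p, q]
  | n + 1 => by
    have ih := pell_pq n
    simp only [p, q]
    push_cast
    ring_nf
    ring_nf at ih
    nlinarith [ih]

lemma q_pos (n : ℕ) : 1 ≤ q n := by
  induction n with
  | zero => simp [q]
  | succ k ih => simp only [q]; omega

lemma p_ge (n : ℕ) : n + 1 ≤ p n := by
  induction n with
  | zero => simp [p]
  | succ k ih =>
    have hq : 1 ≤ q k := q_pos k
    simp only [p]; omega

/-- The angles ω n converge to the right angle. -/
theorem omega_tendsto_right_angle :
    Filter.Tendsto (fun n => Real.arccos (1 - ((q n : ℝ)) ^ 2 / (2 * ((p n : ℝ)) ^ 2)))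
      Filter.atTop (nhds (Real.pi / 2)) := by
  have hf : Filter.Tendsto (fun n : ℕ => 1 - ((q n : ℝ)) ^ 2 / (2 * ((p n : ℝ)) ^ 2))
      Filter.atTop (nhds 0) := by
    refine squeeze_zero_norm ?_ tendsto_one_div_add_atTop_nhds_zero_nat
    intro n
    have hp : (0 : ℝ) < (p n : ℝ) := by
      have := p_ge n
      exact_mod_cast Nat.lt_of_lt_of_le n.succ_pos this
    have hval : 1 - ((q n : ℝ)) ^ 2 / (2 * ((p n : ℝ)) ^ 2)
        = -(-1) ^ (n + 1) / (2 * ((p n : ℝ)) ^ 2) := by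
      rw [pell_pq n]
      field_simp
      ring
    rw [hval]
    have hpn : ((n : ℝ) + 1) ≤ (p n : ℝ) := by exact_mod_cast p_ge n
    have h1 : ((n : ℝ) + 1) ≤ 2 * ((p n : ℝ)) ^ 2 := by nlinarith
    rw [norm_div, norm_neg]
    have : ‖((-1 : ℝ)) ^ (n + 1)‖ = 1 := by
      rw [norm_pow, norm_neg, norm_one, one_pow]
    rw [this]
    have h2 : (0 : ℝ) < (n : ℝ) + 1 := by positivity
    rw [Real.norm_of_nonneg (by positivity)]
    exact one_div_le_one_div_of_le h2 h1
  have := (Real.continuous_arccos.tendsto 0).comp hf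
  simpa [Real.arccos_zero, Function.comp_def] using this
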